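/- Let κ be continuous with -K ≤ κ(t) ≤ -k for all t, 0 < k ≤ K, and let r : ℝ → ℝ be a globally defined solution of the Riccati equation r' + r² + κ = 0 with r(t) > 0 for all t. Then √k ≤ r(t) ≤ √K for all t ∈ ℝ. -/

import Mathlib

open Set

/-- A positive function on ℝ whose derivative is ≤ -c < 0 whenever it is below its
initial value cannot exist. -/
lemma aux_no_such (h h' : ℝ → ℝ) (c : ℝ) (hc : 0 < c)
    (hd : ∀ s, HasDerivAt h (h' s) s)
    (hpos : ∀ s, 0 < h s)
    (hbound : ∀ s, 0 ≤ s → h s ≤ h 0 → h' s ≤ -c) : False := by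
  have hcont : Continuous h := by
    rw [continuous_iff_continuousAt]; exact fun s => (hd s).continuousAt
  set b := (h 0 + 1) * (2 / c) with hbdef
  have hb0 : 0 ≤ b := by
    have := hpos 0
    positivity
  -- Step 1: h stays ≤ h 0 on [0, ∞)
  have step1 : ∀ x : ℝ, 0 ≤ x → h x ≤ h 0 := by
    intro x hx
    have key := image_le_of_deriv_right_lt_deriv_boundary (f := h) (f' := h')
      (a := 0) (b := x) hcont.continuousOn
      (fun y _ => (hd y).hasDerivWithinAt)
      (le_refl (h 0)) (B := fun _ => h 0) (B' := fun _ => 0)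
      (fun y => hasDerivAt_const y (h 0))
      (fun y hy heq => by
        have := hbound y hy.1 heq.le
        show h' y < 0
        linarith)
    exact key ⟨hx, le_rfl⟩
  -- Step 2: linear decay
  have step2 : h b ≤ h 0 + 1 - c / 2 * b := by
    have key := image_le_of_deriv_right_lt_deriv_boundary (f := h) (f' := h')
      (a := 0) (b := b) hcont.continuousOn
      (fun y _ => (hd y).hasDerivWithinAt)
      (by norm_num : h 0 ≤ h 0 + 1 - c / 2 * 0)
      (B := fun x => h 0 + 1 - c / 2 * x) (B' := fun _ => -(c / 2))
      (fun y => by simpa using ((hasDerivAt_id y).const_mul (c / 2)).const_sub (h 0 + 1))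
      (fun y hy _ => by
        have := hbound y hy.1 (step1 y hy.1)
        show h' y < -(c / 2)
        linarith)
    exact key ⟨hb0, le_rfl⟩
  have hbeq : c / 2 * b = h 0 + 1 := by
    rw [hbdef]; field_simp
  have := hpos b
  linarith

theorem stmt_13 (κ r : ℝ → ℝ) (k K : ℝ)
    (hk : 0 < k) (hkK : k ≤ K)
    (hκc : Continuous κ)
    (hκ : ∀ t : ℝ, -K ≤ κ t ∧ κ t ≤ -k)
    (hr : ∀ t : ℝ, HasDerivAt r (-(r t) ^ 2 - κ t) t)
    (hrpos : ∀ t : ℝ, 0 < r t) :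
    ∀ t : ℝ, Real.sqrt k ≤ r t ∧ r t ≤ Real.sqrt K := by
  intro t
  have hK : 0 < K := lt_of_lt_of_le hk hkK
  constructor
  · -- lower bound
    by_contra hlt
    push_neg at hlt
    have hrt2 : (r t) ^ 2 < k := by
      have := (Real.lt_sqrt (hrpos t).le).mp hlt
      linarith
    set h : ℝ → ℝ := fun s => r (t - s) with hhdef
    have hd : ∀ s, HasDerivAt h ((r (t - s)) ^ 2 + κ (t - s)) s := by
      intro s
      have h1 : HasDerivAt (fun s : ℝ => t - s) (-1) s := by
        simpa using (hasDerivAt_id s).const_sub t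
      have := (hr (t - s)).comp s h1
      simpa [hhdef, Function.comp_def] using this.congr_deriv (by ring)
    have h0 : h 0 = r t := by simp [hhdef]
    refine aux_no_such h (fun s => (r (t - s)) ^ 2 + κ (t - s)) (k - (r t) ^ 2)
      (by linarith) hd (fun s => hrpos (t - s)) ?_
    intro s _ hs
    have h1 : (r (t - s)) ^ 2 ≤ (r t) ^ 2 := by
      have := hrpos (t - s)
      have hle : r (t - s) ≤ r t := by rw [← h0]; exact hs
      nlinarith
    have h2 := (hκ (t - s)).2
    show (r (t - s)) ^ 2 + κ (t - s) ≤ -(k - (r t) ^ 2)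
    linarith
  · -- upper bound
    by_contra hlt
    push_neg at hlt
    have hrt2 : K < (r t) ^ 2 := by
      have := (Real.sqrt_lt' (hrpos t)).mp hlt
      linarith
    set h : ℝ → ℝ := fun s => (r (t - s))⁻¹ with hhdef
    have hd : ∀ s, HasDerivAt h (-((r (t - s)) ^ 2 + κ (t - s)) / (r (t - s)) ^ 2) s := by
      intro s
      have h1 : HasDerivAt (fun s : ℝ => t - s) (-1) s := by
        simpa using (hasDerivAt_id s).const_sub t
      have h2 : HasDerivAt (fun s : ℝ => r (t - s)) ((r (t - s)) ^ 2 + κ (t - s)) s := by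
        have := (hr (t - s)).comp s h1
        simpa [Function.comp_def] using this.congr_deriv (by ring)
      exact h2.inv (ne_of_gt (hrpos (t - s)))
    have h0 : h 0 = (r t)⁻¹ := by simp [hhdef]
    refine aux_no_such h (fun s => -((r (t - s)) ^ 2 + κ (t - s)) / (r (t - s)) ^ 2)
      (1 - K / (r t) ^ 2) ?_ hd
      (fun s => by simp only [hhdef]; exact inv_pos.mpr (hrpos (t - s))) ?_
    · have h1 : (0:ℝ) < (r t) ^ 2 := pow_pos (hrpos t) 2
      rw [sub_pos, div_lt_one h1]
      exact hrt2
    · intro s _ hs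
      have hpos' := hrpos (t - s)
      have hrt := hrpos t
      rw [h0] at hs
      simp only [hhdef] at hs
      have hA : (0:ℝ) < (r (t - s)) ^ 2 := pow_pos hpos' 2
      have hB : (0:ℝ) < (r t) ^ 2 := pow_pos hrt 2
      have hle : r t ≤ r (t - s) := by
        have e1 := mul_inv_cancel₀ hpos'.ne'
        have e2 := mul_inv_cancel₀ hrt.ne'
        nlinarith [mul_pos hpos' hrt]
      have hκ1 := (hκ (t - s)).1
      have hBA : (r t) ^ 2 ≤ (r (t - s)) ^ 2 := by nlinarith
      have hq : K / (r t) ^ 2 * (r t) ^ 2 = K := div_mul_cancel₀ _ hB.ne'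
      have key : 1 - K / (r t) ^ 2 ≤ ((r (t - s)) ^ 2 + κ (t - s)) / (r (t - s)) ^ 2 := by
        rw [le_div_iff₀ hA]
        nlinarith [div_nonneg hK.le hB.le]
      show -((r (t - s)) ^ 2 + κ (t - s)) / (r (t - s)) ^ 2 ≤ -(1 - K / (r t) ^ 2)
      rw [neg_div]
      exact neg_le_neg key
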